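/- Fix an integer k ≥ 1 and a point z = ρe^{iβ} of the open unit disc (0 ≤ ρ < 1). For 0 ≤ p ≤ k define J_{k,p}(z) := (1/2π) ∫₀^{2π} e^{ik β₋(z,θ)} e^{2ip α₋(z,θ)} dθ. Then J_{k,0}(z) = (−1)^k J_{k,k}(z) = z^k / 2, and J_{k,p}(z) = 0 for every 0 < p < k; consequently Σ_{p=0}^{k} (−1)^p J_{k,p}(z) = z^k. -/

import Mathlib

open MeasureTheory Set

noncomputable section

/-- The unit-modulus number `w = √(1 - ρ² sin²(θ-β)) + iρ sin(θ-β)`; the fan-beam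
coordinates `(β₋, α₋)` of the ingoing point of the line through `ρe^{iβ}` with
direction `e^{iθ}` satisfy `e^{iβ₋} = -e^{iθ} w` and `e^{iα₋} = conj w`. -/
def wq (ρ β θ : ℝ) : ℂ :=
  (Real.sqrt (1 - ρ ^ 2 * Real.sin (θ - β) ^ 2) : ℂ)
    + Complex.I * ((ρ * Real.sin (θ - β) : ℝ) : ℂ)

namespace Statement14Aux

open Complex

/-- `Q(v) = v(v+ρ)/(1+ρv)`. -/
def Qc (ρ : ℝ) (v : ℂ) : ℂ := v * (v + ρ) / (1 + ρ * v)

/-- `N(v) = (ρv²+2v+ρ)/((v+ρ)(1+ρv))`. -/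
def Nc (ρ : ℝ) (v : ℂ) : ℂ := (ρ * v ^ 2 + 2 * v + ρ) / ((v + ρ) * (1 + ρ * v))

/-- the function on the circle -/
def ff (ρ : ℝ) (k p : ℕ) (x : ℝ) : ℂ :=
  (1 / 2) * Complex.exp (((k : ℂ) - 2 * p) * (Complex.I * x)) *
    Qc ρ (Complex.exp (Complex.I * x)) ^ p * Nc ρ (Complex.exp (Complex.I * x))

/-- the integrand of the circle integral -/
def FF (ρ : ℝ) (k p : ℕ) (v : ℂ) : ℂ :=
  (Complex.I * v)⁻¹ * ((1 / 2) * v ^ ((k : ℤ) - 2 * p) * Qc ρ v ^ p * Nc ρ v)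

def psi (ρ x : ℝ) : ℝ := x + Real.arcsin (ρ * Real.sin x)

def psid (ρ x : ℝ) : ℝ := 1 + ρ * Real.cos x / Real.sqrt (1 - (ρ * Real.sin x) ^ 2)

variable {ρ : ℝ}

lemma one_add_ne (h0 : 0 ≤ ρ) (h1 : ρ < 1) {v : ℂ} (hv : ‖v‖ ≤ 1) :
    (1 : ℂ) + ρ * v ≠ 0 := by
  intro h
  have h2 : ‖(ρ:ℂ) * v‖ = 1 := by
    rw [show (ρ:ℂ) * v = -1 by linear_combination h]; simp
  rw [norm_mul, Complex.norm_real, Real.norm_eq_abs, _root_.abs_of_nonneg h0] at h2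
  have hv' : ‖v‖ ≤ 1 := hv
  nlinarith [norm_nonneg v]

lemma add_rho_ne (h0 : 0 ≤ ρ) (h1 : ρ < 1) {v : ℂ} (hv : ‖v‖ = 1) :
    v + (ρ : ℂ) ≠ 0 := by
  intro h
  have h2 : ‖v‖ = ρ := by
    rw [show v = -(ρ:ℂ) by linear_combination h]; simp [_root_.abs_of_nonneg h0]
  have hv' : ‖v‖ = 1 := hv
  rw [h2] at hv'
  linarith

lemma norm_exp_I_mul (φ : ℝ) : ‖Complex.exp (Complex.I * φ)‖ = 1 := by
  rw [mul_comm]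
  exact Complex.norm_exp_ofReal_mul_I φ


lemma claimA (h0 : 0 ≤ ρ) (h1 : ρ < 1) (k p : ℕ) (β φ : ℝ) :
    (-(Complex.exp (Complex.I * ((φ + β : ℝ) : ℂ)) * wq ρ β (φ + β))) ^ k *
      (starRingEnd ℂ (wq ρ β (φ + β))) ^ (2 * p)
    = (-1 : ℂ) ^ k * Complex.exp (Complex.I * k * β) *
        (((psid ρ φ : ℝ) : ℂ) * ff ρ k p (psi ρ φ)) := by
  set a : ℝ := ρ * Real.sin φ with ha_def
  have ha1 : a ^ 2 < 1 := by
    rw [ha_def]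
    have h2 := Real.sin_sq_le_one φ
    nlinarith [mul_nonneg (sq_nonneg ρ) (sub_nonneg.mpr h2), sq_nonneg ρ]
  have habs : |a| < 1 := by nlinarith [_root_.sq_abs a, abs_nonneg a]
  have ham : -1 < a := (abs_lt.mp habs).1
  have hap : a < 1 := (abs_lt.mp habs).2
  set c : ℝ := Real.sqrt (1 - a ^ 2) with hc_def
  have hc2 : c ^ 2 = 1 - a ^ 2 := Real.sq_sqrt (by linarith)
  have hcpos : 0 < c := Real.sqrt_pos.mpr (by linarith)
  have hwq : wq ρ β (φ + β) = (c : ℂ) + Complex.I * (a : ℝ) := by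
    unfold wq
    rw [add_sub_cancel_right]
    have e1 : 1 - ρ ^ 2 * Real.sin φ ^ 2 = 1 - a ^ 2 := by rw [ha_def]; ring
    rw [e1, ← ha_def, ← hc_def]
  set s : ℂ := (Real.sin φ : ℂ) with hs_def
  set t : ℂ := (Real.cos φ : ℂ) with ht_def
  have hst : s ^ 2 + t ^ 2 = 1 := by
    rw [hs_def, ht_def]; norm_cast; exact Real.sin_sq_add_cos_sq φ
  have hI : (Complex.I) ^ 2 = -1 := Complex.I_sq
  set u : ℂ := Complex.exp (Complex.I * φ) with hu_def
  have hu : u = t + s * Complex.I := by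
    rw [hu_def, show Complex.I * (φ : ℂ) = (φ : ℂ) * Complex.I by ring, Complex.exp_mul_I,
      ← Complex.ofReal_cos, ← Complex.ofReal_sin, ← hs_def, ← ht_def]
  set w : ℂ := (c : ℂ) + Complex.I * (a : ℝ) with hw_def
  have hw_exp : Complex.exp (Complex.I * ((Real.arcsin a : ℝ) : ℂ)) = w := by
    rw [show Complex.I * ((Real.arcsin a : ℝ) : ℂ) = ((Real.arcsin a : ℝ) : ℂ) * Complex.I by ring,
      Complex.exp_mul_I, ← Complex.ofReal_cos, ← Complex.ofReal_sin,
      Real.cos_arcsin, Real.sin_arcsin (by linarith) (by linarith), hw_def, ← hc_def]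
    ring
  have hac : (a : ℂ) = (ρ : ℂ) * s := by rw [ha_def, hs_def]; push_cast; ring
  have hc2c : (c : ℂ) ^ 2 = 1 - (a : ℂ) ^ 2 := by exact_mod_cast hc2
  have h1w : 1 - w ^ 2 = -2 * Complex.I * (a : ℂ) * w := by
    rw [hw_def]; linear_combination (a : ℂ) ^ 2 * hI - hc2c
  have h2u : 1 - u ^ 2 = -2 * Complex.I * s * u := by
    rw [hu]; linear_combination s ^ 2 * hI - hst
  have hconj : (starRingEnd ℂ) w = (c : ℂ) - Complex.I * (a : ℝ) := by
    rw [hw_def, map_add, map_mul, Complex.conj_I, Complex.conj_ofReal, Complex.conj_ofReal]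
    ring
  have hw_unit : w * (starRingEnd ℂ) w = 1 := by
    rw [hconj, hw_def]; linear_combination hc2c - (a : ℂ) ^ 2 * hI
  have hw_ne : w ≠ 0 := by
    intro h; rw [h, zero_mul] at hw_unit; exact zero_ne_one hw_unit
  have hu_ne : u ≠ 0 := Complex.exp_ne_zero _
  have hnw : ‖w‖ = 1 := by rw [← hw_exp]; exact norm_exp_I_mul _
  have hnuw : ‖u * w‖ = 1 := by rw [norm_mul, hu_def, norm_exp_I_mul, hnw, one_mul]
  have hden1 : (1 : ℂ) + ρ * (u * w) ≠ 0 := one_add_ne h0 h1 (le_of_eq hnuw)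
  have hden2 : u * w + (ρ : ℂ) ≠ 0 := add_rho_ne h0 h1 hnuw
  have hQ : Qc ρ (u * w) = u ^ 2 := by
    rw [Qc, div_eq_iff hden1]
    linear_combination (-(u ^ 2)) * h1w + (ρ : ℂ) * u * w * h2u + 2 * Complex.I * u ^ 2 * w * hac
  set r : ℝ := Real.cos φ * c - Real.sin φ * a with hr_def
  clear_value a c s t u w r
  have hrc : ((r : ℝ) : ℂ) = t * (c : ℂ) - s * (a : ℂ) := by
    rw [hr_def, hs_def, ht_def]; push_cast; ring
  have hv1 : (u * w) * ((t - s * Complex.I) * ((c : ℂ) - Complex.I * (a : ℂ))) = 1 := by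
    rw [hu, hw_def]
    linear_combination ((c : ℂ) ^ 2 - Complex.I ^ 2 * (a : ℂ) ^ 2) * hst + hc2c -
      (s ^ 2 * ((c : ℂ) ^ 2 - Complex.I ^ 2 * (a : ℂ) ^ 2) + (a : ℂ) ^ 2) * hI
  have hv2 : (u * w) + ((t - s * Complex.I) * ((c : ℂ) - Complex.I * (a : ℂ))) =
      2 * ((r : ℝ) : ℂ) := by
    rw [hu, hw_def, hrc]
    linear_combination (2 * s * (a : ℂ)) * hI
  have hA : (ρ : ℂ) * (u * w) ^ 2 + 2 * (u * w) + ρ =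
      2 * (u * w) * (1 + ρ * ((r : ℝ) : ℂ)) := by
    linear_combination (ρ : ℂ) * (u * w) * hv2 - (ρ : ℂ) * hv1
  have hB : (u * w + ρ) * (1 + ρ * (u * w)) =
      (u * w) * (1 + 2 * ρ * ((r : ℝ) : ℂ) + ρ ^ 2) := by
    linear_combination (ρ : ℂ) * (u * w) * hv2 - (ρ : ℂ) * hv1
  have huw_ne : u * w ≠ 0 := mul_ne_zero hu_ne hw_ne
  have hfac_ne : (1 : ℂ) + 2 * ρ * ((r : ℝ) : ℂ) + ρ ^ 2 ≠ 0 := by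
    intro hzero
    have h5 : (u * w + ρ) * (1 + ρ * (u * w)) = 0 := by rw [hB, hzero, mul_zero]
    rcases mul_eq_zero.mp h5 with h6 | h6
    · exact hden2 h6
    · exact hden1 h6
  have hreal : (1 + ρ * Real.cos φ / c) * (1 + ρ * r) = 1 + 2 * ρ * r + ρ ^ 2 := by
    have hst' : Real.sin φ ^ 2 + Real.cos φ ^ 2 = 1 := Real.sin_sq_add_cos_sq φ
    rw [hr_def]
    field_simp
    linear_combination (-(ρ * Real.cos φ)) * hc2 + (ρ ^ 2 * c) * hst' +
      (ρ * (Real.cos φ * a + Real.sin φ * c)) * ha_def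
  have hsqrt_eq : Real.sqrt (1 - (ρ * Real.sin φ) ^ 2) = c := by rw [hc_def, ha_def]
  have hpsid : ((psid ρ φ : ℝ) : ℂ) = ((1 + ρ * Real.cos φ / c : ℝ) : ℂ) := by
    simp only [psid, hsqrt_eq]
  have hrealC : ((1 + ρ * Real.cos φ / c : ℝ) : ℂ) * (1 + (ρ : ℂ) * ((r : ℝ) : ℂ)) =
      1 + 2 * (ρ : ℂ) * ((r : ℝ) : ℂ) + (ρ : ℂ) ^ 2 := by exact_mod_cast hreal
  have hN : ((psid ρ φ : ℝ) : ℂ) * Nc ρ (u * w) = 2 := by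
    rw [hpsid, Nc, hA, hB, mul_div_assoc', div_eq_iff (mul_ne_zero huw_ne hfac_ne)]
    linear_combination 2 * (u * w) * hrealC
  have hpsid_ne : ((psid ρ φ : ℝ) : ℂ) ≠ 0 := by
    intro h; rw [h, zero_mul] at hN; exact (by norm_num : (0 : ℂ) ≠ 2) hN
  have hNc_val : Nc ρ (u * w) = 2 / ((psid ρ φ : ℝ) : ℂ) := by
    rw [eq_div_iff hpsid_ne]; linear_combination hN
  have hV : Complex.exp (Complex.I * ((psi ρ φ : ℝ) : ℂ)) = u * w := by
    simp only [psi, ← ha_def]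
    push_cast
    rw [show Complex.I * ((φ : ℂ) + ((Real.arcsin a : ℝ) : ℂ)) =
        Complex.I * φ + Complex.I * ((Real.arcsin a : ℝ) : ℂ) by ring,
      Complex.exp_add, hw_exp, ← hu_def]
  have hE : Complex.exp (((k : ℂ) - 2 * p) * (Complex.I * ((psi ρ φ : ℝ) : ℂ))) =
      (u * w) ^ k * ((u * w) ^ (2 * p))⁻¹ := by
    rw [sub_mul, Complex.exp_sub, show ((2 : ℂ) * p) = ((2 * p : ℕ) : ℂ) by push_cast; ring,
      Complex.exp_nat_mul, Complex.exp_nat_mul, hV, div_eq_mul_inv]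
  have hffval : ((psid ρ φ : ℝ) : ℂ) * ff ρ k p (psi ρ φ) =
      u ^ k * w ^ k * (w ^ (2 * p))⁻¹ := by
    rw [ff, hV, hE, hQ, hNc_val]
    field_simp [hu_ne, hw_ne, pow_ne_zero, mul_ne_zero]
    ring
  have hconj_inv : (starRingEnd ℂ) w = w⁻¹ := eq_inv_of_mul_eq_one_right hw_unit
  have hsplit : Complex.exp (Complex.I * ((φ + β : ℝ) : ℂ)) =
      Complex.exp (Complex.I * (β : ℂ)) * u := by
    rw [hu_def, ← Complex.exp_add]
    congr 1
    push_cast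
    ring
  have hexpk : (Complex.exp (Complex.I * (β : ℂ))) ^ k = Complex.exp (Complex.I * k * β) := by
    rw [← Complex.exp_nat_mul]
    congr 1
    ring
  rw [hwq, hconj_inv, hsplit, hffval, neg_pow, mul_pow, mul_pow, hexpk, inv_pow]
  ring

lemma psi_hasDeriv (h0 : 0 ≤ ρ) (h1 : ρ < 1) (x : ℝ) :
    HasDerivAt (psi ρ) (psid ρ x) x := by
  have h2 := Real.neg_one_le_sin x
  have h3 := Real.sin_le_one x
  have hlt : ρ * Real.sin x < 1 := by nlinarith
  have hgt : -1 < ρ * Real.sin x := by nlinarith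
  have harc := Real.hasDerivAt_arcsin (ne_of_gt hgt) (ne_of_lt hlt)
  have hinner : HasDerivAt (fun y => ρ * Real.sin y) (ρ * Real.cos x) x :=
    (Real.hasDerivAt_sin x).const_mul ρ
  have hsum := (hasDerivAt_id x).add (harc.comp x hinner)
  have hd : psid ρ x = 1 + 1 / Real.sqrt (1 - (ρ * Real.sin x) ^ 2) * (ρ * Real.cos x) := by
    unfold psid; ring
  rw [hd]
  unfold psi
  exact hsum

lemma psid_continuous (h0 : 0 ≤ ρ) (h1 : ρ < 1) : Continuous (psid ρ) := by
  unfold psid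
  have hden : ∀ x : ℝ, Real.sqrt (1 - (ρ * Real.sin x) ^ 2) ≠ 0 := by
    intro x
    have h2 := Real.sin_sq_le_one x
    rw [Real.sqrt_ne_zero']
    nlinarith [mul_nonneg (sq_nonneg ρ) (sub_nonneg.mpr h2), sq_nonneg ρ]
  exact continuous_const.add (Continuous.div (by fun_prop) (by fun_prop) hden)

lemma ff_continuous (h0 : 0 ≤ ρ) (h1 : ρ < 1) (k p : ℕ) : Continuous (ff ρ k p) := by
  unfold ff Qc Nc
  have hd1 : ∀ x : ℝ, (1 : ℂ) + ρ * Complex.exp (Complex.I * x) ≠ 0 := fun x =>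
    one_add_ne h0 h1 (le_of_eq (norm_exp_I_mul x))
  have hd2 : ∀ x : ℝ, Complex.exp (Complex.I * x) + (ρ : ℂ) ≠ 0 := fun x =>
    add_rho_ne h0 h1 (norm_exp_I_mul x)
  refine ((continuous_const.mul (by fun_prop)).mul ?_).mul ?_
  · exact (Continuous.div (by fun_prop) (by fun_prop) hd1).pow p
  · exact Continuous.div (by fun_prop) (by fun_prop)
      (fun x => mul_ne_zero (hd2 x) (hd1 x))

lemma claimB (h0 : 0 ≤ ρ) (h1 : ρ < 1) (k p : ℕ) :
    (∫ φ in (0:ℝ)..(2*Real.pi), ((psid ρ φ : ℝ) : ℂ) * ff ρ k p (psi ρ φ))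
      = ∫ x in (0:ℝ)..(2*Real.pi), ff ρ k p x := by
  have h := intervalIntegral.integral_comp_smul_deriv (f := psi ρ) (f' := psid ρ)
    (g := ff ρ k p) (a := 0) (b := 2*Real.pi)
    (fun x _ => psi_hasDeriv h0 h1 x) ((psid_continuous h0 h1).continuousOn)
    (ff_continuous h0 h1 k p)
  have h00 : psi ρ 0 = 0 := by simp [psi]
  have h2pi : psi ρ (2*Real.pi) = 2*Real.pi := by simp [psi, Real.sin_two_pi]
  rw [h00, h2pi] at h
  rw [← h]
  refine intervalIntegral.integral_congr fun x _ => ?_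
  simp [Complex.real_smul, Function.comp]

lemma claimC (h0 : 0 ≤ ρ) (h1 : ρ < 1) (k p : ℕ) :
    (∫ x in (0:ℝ)..(2*Real.pi), ff ρ k p x) = ∮ v in C(0, 1), FF ρ k p v := by
  rw [circleIntegral]
  refine intervalIntegral.integral_congr fun θ _ => ?_
  have hcm : circleMap 0 1 θ = Complex.exp (Complex.I * θ) := by
    simp [circleMap]
    congr 1
    ring
  have he : Complex.exp (Complex.I * (θ:ℂ)) ≠ 0 := Complex.exp_ne_zero _
  have hzpow : Complex.exp (Complex.I * (θ:ℂ)) ^ ((k:ℤ) - 2*p) =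
      Complex.exp (((k:ℂ) - 2*p) * (Complex.I * θ)) := by
    rw [show ((k:ℂ) - 2*p) = (((k:ℤ) - 2*p : ℤ) : ℂ) by push_cast; ring, Complex.exp_int_mul]
  rw [deriv_circleMap, hcm, FF, ff, smul_eq_mul, hzpow]
  field_simp [he, Complex.I_ne_zero]

lemma sphere_facts (h0 : 0 ≤ ρ) (h1 : ρ < 1) {v : ℂ} (hv : v ∈ Metric.sphere (0:ℂ) 1) :
    v ≠ 0 ∧ ((1:ℂ) + ρ * v ≠ 0) ∧ (v + (ρ:ℂ) ≠ 0) ∧ ‖v‖ = 1 := by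
  have hv1 : ‖v‖ = 1 := by simpa using hv
  have hvne : v ≠ 0 := by
    intro h; rw [h] at hv1; simp at hv1
  exact ⟨hvne, one_add_ne h0 h1 (le_of_eq hv1), add_rho_ne h0 h1 hv1, hv1⟩

lemma ball_ne (h0 : 0 ≤ ρ) (h1 : ρ < 1) {v : ℂ} (hv : v ∈ Metric.closedBall (0:ℂ) 1) :
    (1:ℂ) + ρ * v ≠ 0 :=
  one_add_ne h0 h1 (by simpa [Metric.mem_closedBall] using hv)

lemma evalMid (h0 : 0 ≤ ρ) (h1 : ρ < 1) {k p : ℕ} (hp0 : 0 < p) (hpk : p < k) :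
    (∮ v in C(0, 1), FF ρ k p v) = 0 := by
  obtain ⟨q, rfl⟩ : ∃ q, p = q + 1 := ⟨p - 1, (Nat.succ_pred_eq_of_pos hp0).symm⟩
  obtain ⟨m, rfl⟩ : ∃ m, k = (q + 1) + m + 1 := ⟨k - q - 2, by omega⟩
  set G : ℂ → ℂ := fun v => (1 / (2 * Complex.I)) * v ^ m * (v + (ρ:ℂ)) ^ q *
    ((ρ : ℂ) * v ^ 2 + 2 * v + ρ) * (((1:ℂ) + ρ * v) ^ (q + 2))⁻¹ with hG
  have heq : Set.EqOn (FF ρ (q+1+m+1) (q+1)) G (Metric.sphere (0:ℂ) 1) := by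
    intro v hv
    obtain ⟨hvne, hd1, hd2, hv1⟩ := sphere_facts h0 h1 hv
    have hz : v ^ (((q+1+m+1 : ℕ) : ℤ) - 2 * ((q+1 : ℕ) : ℤ)) = v ^ m * (v ^ q)⁻¹ := by
      rw [show (((q+1+m+1 : ℕ) : ℤ) - 2 * ((q+1:ℕ) : ℤ)) = (m : ℤ) - (q : ℤ) by push_cast; ring,
        zpow_sub₀ hvne, zpow_natCast, zpow_natCast, div_eq_mul_inv]
    have hB : (Complex.I * v) * v ^ q * ((1:ℂ) + ρ*v) ^ (q+1) * ((v + (ρ:ℂ)) * (1 + ρ*v)) ≠ 0 :=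
      mul_ne_zero (mul_ne_zero (mul_ne_zero (mul_ne_zero Complex.I_ne_zero hvne)
        (pow_ne_zero _ hvne)) (pow_ne_zero _ hd1)) (mul_ne_zero hd2 hd1)
    have hD : (2 * Complex.I * ((1:ℂ) + ρ*v) ^ (q+2)) ≠ 0 :=
      mul_ne_zero (mul_ne_zero two_ne_zero Complex.I_ne_zero) (pow_ne_zero _ hd1)
    have hL : FF ρ (q+1+m+1) (q+1) v =
        ((1/2) * v ^ m * (v ^ (q+1) * (v + (ρ:ℂ)) ^ (q+1)) * ((ρ:ℂ) * v^2 + 2*v + ρ)) /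
          ((Complex.I * v) * v ^ q * ((1:ℂ) + ρ*v) ^ (q+1) * ((v + (ρ:ℂ)) * (1 + ρ*v))) := by
      rw [FF, Qc, Nc, hz]
      simp only [div_eq_mul_inv, mul_inv, inv_pow, mul_pow]
      ring
    have hR : G v = (v ^ m * (v + (ρ:ℂ)) ^ q * ((ρ:ℂ) * v^2 + 2*v + ρ)) /
        (2 * Complex.I * ((1:ℂ) + ρ*v) ^ (q+2)) := by
      simp only [hG]
      simp only [div_eq_mul_inv, mul_inv, inv_pow]
      ring
    rw [hL, hR, div_eq_div_iff hB hD]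
    ring
  have hdiff : ∀ v ∈ Metric.closedBall (0:ℂ) 1, DifferentiableAt ℂ G v := by
    intro v hv
    have hne : ((1:ℂ) + ρ * v) ^ (q + 2) ≠ 0 := pow_ne_zero _ (ball_ne h0 h1 hv)
    have hA : DifferentiableAt ℂ (fun v : ℂ => (1 / (2 * Complex.I)) * v ^ m *
        (v + (ρ:ℂ)) ^ q * ((ρ : ℂ) * v ^ 2 + 2 * v + ρ)) v := by fun_prop
    have hB : DifferentiableAt ℂ (fun v : ℂ => (((1:ℂ) + ρ * v) ^ (q + 2))⁻¹) v :=
      DifferentiableAt.inv (by fun_prop) hne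
    exact hA.mul hB
  rw [circleIntegral.integral_congr (by norm_num) heq]
  exact circleIntegral_eq_zero_of_differentiable_on_off_countable (by norm_num)
    Set.countable_empty
    (fun v hv => (hdiff v hv).continuousAt.continuousWithinAt)
    (fun v hv => hdiff v (Metric.ball_subset_closedBall hv.1))

lemma eval0 (h0 : 0 ≤ ρ) (h1 : ρ < 1) {k : ℕ} (hk : 1 ≤ k) :
    (∮ v in C(0, 1), FF ρ k 0 v) = (-1 : ℂ) ^ k * Real.pi * ρ ^ k := by
  obtain ⟨m, rfl⟩ : ∃ m, k = m + 1 := ⟨k - 1, by omega⟩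
  set g : ℂ → ℂ := fun v => (1 / (2 * Complex.I)) * v ^ m *
    ((ρ:ℂ) * v ^ 2 + 2 * v + ρ) * ((1:ℂ) + ρ * v)⁻¹ with hg
  have heq : Set.EqOn (FF ρ (m+1) 0) (fun v => (v - (-(ρ:ℂ)))⁻¹ • g v)
      (Metric.sphere (0:ℂ) 1) := by
    intro v hv
    show FF ρ (m+1) 0 v = (v - (-(ρ:ℂ)))⁻¹ • g v
    obtain ⟨hvne, hd1, hd2, hv1⟩ := sphere_facts h0 h1 hv
    have hz : v ^ (((m+1 : ℕ) : ℤ) - 2 * ((0 : ℕ) : ℤ)) = v ^ (m+1) := by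
      rw [show (((m+1 : ℕ) : ℤ) - 2 * ((0:ℕ) : ℤ)) = ((m+1 : ℕ) : ℤ) by push_cast; ring,
        zpow_natCast]
    have hB : (Complex.I * v) * ((v + (ρ:ℂ)) * (1 + ρ*v)) ≠ 0 :=
      mul_ne_zero (mul_ne_zero Complex.I_ne_zero hvne) (mul_ne_zero hd2 hd1)
    have hD : (v + (ρ:ℂ)) * (2 * Complex.I * ((1:ℂ) + ρ*v)) ≠ 0 :=
      mul_ne_zero hd2 (mul_ne_zero (mul_ne_zero two_ne_zero Complex.I_ne_zero) hd1)
    have hL : FF ρ (m+1) 0 v =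
        ((1/2) * v ^ (m+1) * ((ρ:ℂ) * v^2 + 2*v + ρ)) /
          ((Complex.I * v) * ((v + (ρ:ℂ)) * (1 + ρ*v))) := by
      rw [FF, Qc, Nc, hz]
      simp only [pow_zero, div_eq_mul_inv, mul_inv, inv_pow, mul_one]
      ring
    have hR : (v - (-(ρ:ℂ)))⁻¹ • g v = (v ^ m * ((ρ:ℂ) * v^2 + 2*v + ρ)) /
        ((v + (ρ:ℂ)) * (2 * Complex.I * ((1:ℂ) + ρ*v))) := by
      simp only [hg, smul_eq_mul]
      rw [show v - -(ρ:ℂ) = v + ρ from by ring]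
      simp only [div_eq_mul_inv, mul_inv, inv_pow]
      ring
    rw [hL, hR, div_eq_div_iff hB hD]
    ring
  have hdiff : ∀ v ∈ Metric.closedBall (0:ℂ) 1, DifferentiableAt ℂ g v := by
    intro v hv
    have hne : ((1:ℂ) + ρ * v) ≠ 0 := ball_ne h0 h1 hv
    exact DifferentiableAt.mul (by fun_prop) (DifferentiableAt.inv (by fun_prop) hne)
  have hdc : DiffContOnCl ℂ g (Metric.ball (0:ℂ) 1) := by
    constructor
    · exact fun v hv => (hdiff v (Metric.ball_subset_closedBall hv)).differentiableWithinAt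
    · rw [closure_ball (0:ℂ) one_ne_zero]
      exact fun v hv => (hdiff v hv).continuousAt.continuousWithinAt
  have hmem : -(ρ:ℂ) ∈ Metric.ball (0:ℂ) 1 := by
    simp only [Metric.mem_ball, dist_zero_right, norm_neg, Complex.norm_real, Real.norm_eq_abs]
    rw [_root_.abs_of_nonneg h0]; exact h1
  rw [circleIntegral.integral_congr (by norm_num) heq, hdc.circleIntegral_sub_inv_smul hmem]
  have hden : ((1:ℂ) + ρ * (-(ρ:ℂ))) ≠ 0 := by
    have : ((1:ℝ) - ρ^2) ≠ 0 := by nlinarith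
    intro h; apply this
    have := congrArg Complex.re h
    simp at this
    nlinarith [this]
  have hgval : g (-(ρ:ℂ)) = (1 / (2 * Complex.I)) * (-(ρ:ℂ))^(m+1) := by
    have hnum : (ρ:ℂ) * (-(ρ:ℂ))^2 + 2*(-(ρ:ℂ)) + ρ = -(ρ:ℂ) * (1 + ρ * (-(ρ:ℂ))) := by ring
    simp only [hg]
    rw [hnum]
    have hcan : ((1:ℂ) + ρ * (-(ρ:ℂ))) * ((1:ℂ) + ρ * (-(ρ:ℂ)))⁻¹ = 1 := mul_inv_cancel₀ hden
    linear_combination ((1 / (2 * Complex.I)) * (-(ρ:ℂ)) ^ m * (-(ρ:ℂ))) * hcan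
  rw [hgval, smul_eq_mul]
  have hI : (Complex.I : ℂ) ≠ 0 := Complex.I_ne_zero
  field_simp
  ring

lemma evalK (h0 : 0 ≤ ρ) (h1 : ρ < 1) {k : ℕ} (hk : 1 ≤ k) :
    (∮ v in C(0, 1), FF ρ k k v) = (Real.pi : ℂ) * ρ ^ k := by
  obtain ⟨m, rfl⟩ : ∃ m, k = m + 1 := ⟨k - 1, by omega⟩
  set g : ℂ → ℂ := fun v => (1 / (2 * Complex.I)) * (v + (ρ:ℂ)) ^ m *
    ((ρ:ℂ) * v ^ 2 + 2 * v + ρ) * (((1:ℂ) + ρ * v) ^ (m + 2))⁻¹ with hg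
  have heq : Set.EqOn (FF ρ (m+1) (m+1)) (fun v => (v - 0)⁻¹ • g v)
      (Metric.sphere (0:ℂ) 1) := by
    intro v hv
    show FF ρ (m+1) (m+1) v = (v - 0)⁻¹ • g v
    obtain ⟨hvne, hd1, hd2, hv1⟩ := sphere_facts h0 h1 hv
    have hz : v ^ (((m+1 : ℕ) : ℤ) - 2 * ((m+1 : ℕ) : ℤ)) = (v ^ (m+1))⁻¹ := by
      rw [show (((m+1 : ℕ) : ℤ) - 2 * ((m+1:ℕ) : ℤ)) = -((m+1 : ℕ) : ℤ) by push_cast; ring,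
        zpow_neg, zpow_natCast]
    have hB : (Complex.I * v) * v ^ (m+1) * ((1:ℂ) + ρ*v) ^ (m+1) * ((v + (ρ:ℂ)) * (1 + ρ*v)) ≠ 0 :=
      mul_ne_zero (mul_ne_zero (mul_ne_zero (mul_ne_zero Complex.I_ne_zero hvne)
        (pow_ne_zero _ hvne)) (pow_ne_zero _ hd1)) (mul_ne_zero hd2 hd1)
    have hD : v * (2 * Complex.I * ((1:ℂ) + ρ*v) ^ (m+2)) ≠ 0 :=
      mul_ne_zero hvne (mul_ne_zero (mul_ne_zero two_ne_zero Complex.I_ne_zero) (pow_ne_zero _ hd1))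
    have hL : FF ρ (m+1) (m+1) v =
        ((1/2) * (v ^ (m+1) * (v + (ρ:ℂ)) ^ (m+1)) * ((ρ:ℂ) * v^2 + 2*v + ρ)) /
          ((Complex.I * v) * v ^ (m+1) * ((1:ℂ) + ρ*v) ^ (m+1) * ((v + (ρ:ℂ)) * (1 + ρ*v))) := by
      rw [FF, Qc, Nc, hz]
      simp only [div_eq_mul_inv, mul_inv, inv_pow, mul_pow]
      ring
    have hR : (v - 0)⁻¹ • g v = ((v + (ρ:ℂ)) ^ m * ((ρ:ℂ) * v^2 + 2*v + ρ)) /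
        (v * (2 * Complex.I * ((1:ℂ) + ρ*v) ^ (m+2))) := by
      simp only [hg, smul_eq_mul, sub_zero]
      simp only [div_eq_mul_inv, mul_inv, inv_pow]
      ring
    rw [hL, hR, div_eq_div_iff hB hD]
    ring
  have hdiff : ∀ v ∈ Metric.closedBall (0:ℂ) 1, DifferentiableAt ℂ g v := by
    intro v hv
    have hne : ((1:ℂ) + ρ * v) ^ (m+2) ≠ 0 := pow_ne_zero _ (ball_ne h0 h1 hv)
    exact DifferentiableAt.mul (by fun_prop) (DifferentiableAt.inv (by fun_prop) hne)
  have hdc : DiffContOnCl ℂ g (Metric.ball (0:ℂ) 1) := by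
    constructor
    · exact fun v hv => (hdiff v (Metric.ball_subset_closedBall hv)).differentiableWithinAt
    · rw [closure_ball (0:ℂ) one_ne_zero]
      exact fun v hv => (hdiff v hv).continuousAt.continuousWithinAt
  have hmem : (0:ℂ) ∈ Metric.ball (0:ℂ) 1 := by simp
  rw [circleIntegral.integral_congr (by norm_num) heq, hdc.circleIntegral_sub_inv_smul hmem]
  have hgval : g 0 = (1 / (2 * Complex.I)) * (ρ:ℂ)^(m+1) := by
    simp only [hg]
    norm_num
    ring
  rw [hgval, smul_eq_mul]
  have hI : (Complex.I : ℂ) ≠ 0 := Complex.I_ne_zero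
  field_simp

lemma main_integral (h0 : 0 ≤ ρ) (h1 : ρ < 1) (k p : ℕ) (hk : 1 ≤ k) (hp : p ≤ k) (β : ℝ) :
    (∫ θ in (0:ℝ)..(2*Real.pi),
        (-(Complex.exp (Complex.I * θ) * wq ρ β θ)) ^ k * (starRingEnd ℂ (wq ρ β θ)) ^ (2*p))
    = (-1:ℂ)^k * Complex.exp (Complex.I * k * β) *
        (if p = 0 then ((-1:ℂ)^k * Real.pi * ρ^k) else if p = k then ((Real.pi : ℂ) * ρ^k)
          else 0) := by
  set I₀ : ℝ → ℂ := fun θ =>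
    (-(Complex.exp (Complex.I * θ) * wq ρ β θ)) ^ k * (starRingEnd ℂ (wq ρ β θ)) ^ (2*p)
    with hI₀
  have hper : Function.Periodic I₀ (2*Real.pi) := by
    intro θ
    have hw : wq ρ β (θ + 2*Real.pi) = wq ρ β θ := by
      unfold wq
      rw [show θ + 2*Real.pi - β = (θ - β) + 2*Real.pi by ring, Real.sin_add_two_pi]
    have he : Complex.exp (Complex.I * ((θ + 2*Real.pi : ℝ) : ℂ)) =
        Complex.exp (Complex.I * θ) := by
      rw [show Complex.I * ((θ + 2*Real.pi : ℝ) : ℂ) =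
          Complex.I * θ + 2*Real.pi*Complex.I by push_cast; ring,
        Complex.exp_add, Complex.exp_two_pi_mul_I, mul_one]
    simp only [hI₀, hw, he]
  have h2 := intervalIntegral.integral_comp_add_right (a := (0:ℝ)) (b := 2*Real.pi)
    (fun θ => I₀ θ) β
  have hshift : (∫ φ in (0:ℝ)..(2*Real.pi), I₀ (φ + β)) = ∫ θ in (0:ℝ)..(2*Real.pi), I₀ θ := by
    rw [h2, zero_add, show 2*Real.pi + β = β + 2*Real.pi by ring,
      hper.intervalIntegral_add_eq β 0, zero_add]
  rw [show (∫ θ in (0:ℝ)..(2*Real.pi),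
        (-(Complex.exp (Complex.I * θ) * wq ρ β θ)) ^ k * (starRingEnd ℂ (wq ρ β θ)) ^ (2*p))
      = ∫ θ in (0:ℝ)..(2*Real.pi), I₀ θ from rfl, ← hshift]
  have hcong : Set.EqOn (fun φ => I₀ (φ + β))
      (fun φ => (-1:ℂ)^k * Complex.exp (Complex.I*k*β) *
        (((psid ρ φ : ℝ) : ℂ) * ff ρ k p (psi ρ φ))) (Set.uIcc (0:ℝ) (2*Real.pi)) :=
    fun φ _ => claimA h0 h1 k p β φ
  rw [intervalIntegral.integral_congr hcong, intervalIntegral.integral_const_mul,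
    claimB h0 h1 k p, claimC h0 h1 k p]
  congr 1
  rcases Nat.eq_zero_or_pos p with hp0 | hp0
  · subst hp0
    rw [if_pos rfl]
    exact eval0 h0 h1 hk
  · rcases eq_or_lt_of_le hp with hpk | hpk
    · subst hpk
      rw [if_neg (by omega), if_pos rfl]
      exact evalK h0 h1 hk
    · rw [if_neg (by omega), if_neg (by omega)]
      exact evalMid h0 h1 hp0 hpk

end Statement14Aux

/-- Fix `k ≥ 1` and `z = ρe^{iβ}` with `0 ≤ ρ < 1`. For `0 ≤ p ≤ k` let
`J_{k,p}(z) = (1/2π) ∫₀^{2π} e^{ikβ₋(z,θ)} e^{2ipα₋(z,θ)} dθ`, written using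
`e^{ikβ₋} = (-e^{iθ}w)^k` and `e^{2ipα₋} = (conj w)^{2p}`. Then
`J_{k,0} = (-1)^k J_{k,k} = z^k/2`, `J_{k,p} = 0` for `0 < p < k`, and
`Σ_{p=0}^k (-1)^p J_{k,p} = z^k`. -/
theorem statement14 (k : ℕ) (hk : 1 ≤ k) (ρ β : ℝ) (h0 : 0 ≤ ρ) (h1 : ρ < 1)
    (z : ℂ) (hz : z = (ρ : ℂ) * Complex.exp (Complex.I * β))
    (J : ℕ → ℂ)
    (hJ : ∀ p : ℕ, J p = (1 / (2 * (Real.pi : ℂ))) *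
      ∫ θ in (0:ℝ)..(2 * Real.pi),
        (-(Complex.exp (Complex.I * θ) * wq ρ β θ)) ^ k *
          (starRingEnd ℂ (wq ρ β θ)) ^ (2 * p)) :
    J 0 = z ^ k / 2 ∧
    (-1 : ℂ) ^ k * J k = z ^ k / 2 ∧
    (∀ p : ℕ, 0 < p → p < k → J p = 0) ∧
    ∑ p ∈ Finset.range (k + 1), (-1 : ℂ) ^ p * J p = z ^ k := by
  have hπ : (Real.pi : ℂ) ≠ 0 := by exact_mod_cast Real.pi_ne_zero
  have hzk : z ^ k = (ρ:ℂ)^k * Complex.exp (Complex.I * k * β) := by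
    rw [hz, mul_pow, ← Complex.exp_nat_mul]
    congr 2
    ring
  have hm1 : (-1:ℂ)^k * (-1:ℂ)^k = 1 := by
    rw [← pow_add, ← two_mul, pow_mul]
    norm_num
  have hJ0 : J 0 = z ^ k / 2 := by
    rw [hJ 0, Statement14Aux.main_integral h0 h1 k 0 hk (Nat.zero_le k) β, if_pos rfl, hzk]
    field_simp
    linear_combination ((ρ:ℂ)^k) * hm1
  have hJk : (-1 : ℂ) ^ k * J k = z ^ k / 2 := by
    rw [hJ k, Statement14Aux.main_integral h0 h1 k k hk le_rfl β,
      if_neg (by omega), if_pos rfl, hzk]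
    field_simp
    linear_combination ((ρ:ℂ)^k) * hm1
  have hJmid : ∀ p : ℕ, 0 < p → p < k → J p = 0 := by
    intro p hp0 hpk
    rw [hJ p, Statement14Aux.main_integral h0 h1 k p hk (le_of_lt hpk) β,
      if_neg (by omega), if_neg (by omega), mul_zero, mul_zero]
  refine ⟨hJ0, hJk, hJmid, ?_⟩
  rw [Finset.sum_range_succ]
  have hmid : ∑ p ∈ Finset.range k, (-1:ℂ)^p * J p = z^k/2 := by
    rw [Finset.sum_eq_single_of_mem 0 (Finset.mem_range.mpr (by omega))
      (fun b hb hbne => by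
        rw [hJmid b (Nat.pos_of_ne_zero hbne) (Finset.mem_range.mp hb), mul_zero])]
    simp [hJ0]
  rw [hmid]
  rw [hJk]
  ring
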